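/- arXiv:1903.00409 — 4 statements merged into one kernel-verified Lean document; each statement's English description precedes it below -/
import Mathlib

section
/- Let H be a normal subgroup of a finite group G and ℬ an S-ring over H. Let 𝒜 = ℬ ≀ ℤ(G/H) denote the S-ring over G whose basic sets are the basic sets of ℬ together with the cosets gH for g ∈ G \ H. Suppose that φ is an algebraic automorphism of ℬ that is not induced by a combinatorial isomorphism. Then there exists an algebraic automorphism ψ of 𝒜 whose restriction to the basic sets of ℬ equals φ and which is not induced by a combinatorial isomorphism. -/
open Pointwise

/-- The number of representations of `z` as a product `x * y` with `x ∈ X`, `y ∈ Y`.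
For an S-ring with basic sets `X, Y, Z` and `z ∈ Z`, this is the structure
constant `c^Z_{X,Y}`. -/
def cnt {G : Type*} [Group G] [DecidableEq G] (X Y : Finset G) (z : G) : ℕ :=
  ((X ×ˢ Y).filter fun p => p.1 * p.2 = z).card

/-- An S-ring over a finite group `G`, presented by its partition into basic sets.
The condition `const` (structure constants are well defined) is equivalent to the
`ℤ`-span of the indicator elements being a subring of the group ring `ℤG`. -/
structure SRing (G : Type*) [Group G] [Fintype G] [DecidableEq G] where
  basicSets : Finset (Finset G)
  nonempty_mem : ∀ X ∈ basicSets, X.Nonempty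
  exists_mem : ∀ g : G, ∃ X ∈ basicSets, g ∈ X
  pairwise_disjoint : ∀ X ∈ basicSets, ∀ Y ∈ basicSets, X ≠ Y → Disjoint X Y
  one_mem : ({1} : Finset G) ∈ basicSets
  inv_mem : ∀ X ∈ basicSets, X⁻¹ ∈ basicSets
  const : ∀ X ∈ basicSets, ∀ Y ∈ basicSets, ∀ Z ∈ basicSets,
    ∀ z ∈ Z, ∀ z' ∈ Z, cnt X Y z = cnt X Y z'

/-- `R(X) = {(g, x*g) : x ∈ X, g ∈ G}`, the arc set of the Cayley graph of `X`. -/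
def RSet {G : Type*} [Group G] (X : Finset G) : Set (G × G) :=
  {p | ∃ x ∈ X, ∃ g : G, p = (g, x * g)}

/-- A combinatorial isomorphism between S-rings: a bijection of the underlying groups
mapping the family of relations `R(X)`, `X` basic, onto the corresponding family. -/
def IsCombIso {G H : Type*} [Group G] [Fintype G] [DecidableEq G]
    [Group H] [Fintype H] [DecidableEq H]
    (A : SRing G) (A' : SRing H) (f : G → H) : Prop :=
  Function.Bijective f ∧
    {S : Set (H × H) | ∃ X ∈ A.basicSets, S = Prod.map f f '' RSet X} =
      {S : Set (H × H) | ∃ X' ∈ A'.basicSets, S = RSet X'}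

/-- An algebraic isomorphism between S-rings: a bijection between the sets
of basic sets preserving the structure constants. -/
def IsAlgIso {G H : Type*} [Group G] [Fintype G] [DecidableEq G]
    [Group H] [Fintype H] [DecidableEq H]
    (A : SRing G) (A' : SRing H) (φ : Finset G → Finset H) : Prop :=
  Set.BijOn φ ↑A.basicSets ↑A'.basicSets ∧
    ∀ X ∈ A.basicSets, ∀ Y ∈ A.basicSets, ∀ Z ∈ A.basicSets,
      ∀ z ∈ Z, ∀ z' ∈ φ Z, cnt X Y z = cnt (φ X) (φ Y) z'

/-- `φ` is the algebraic isomorphism induced by the combinatorial isomorphism `f`,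
i.e. `φ = φ_f` where `R(φ_f(X)) = R(X)^f` for every basic set `X`. -/
def InducedBy {G H : Type*} [Group G] [Fintype G] [DecidableEq G]
    [Group H] [Fintype H] [DecidableEq H]
    (A : SRing G) (A' : SRing H) (φ : Finset G → Finset H) (f : G → H) : Prop :=
  IsCombIso A A' f ∧ ∀ X ∈ A.basicSets, RSet (φ X) = Prod.map f f '' RSet X

/-- A group `G` is separable with respect to the class of all finite abelian groups. -/
def SeparableWrtAbelian (G : Type*) [Group G] [Fintype G] [DecidableEq G] : Prop :=
  ∀ (A : SRing G) (H : Type) [CommGroup H] [Fintype H] [DecidableEq H]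
    (A' : SRing H) (φ : Finset G → Finset H),
      IsAlgIso A A' φ → ∃ f : G → H, InducedBy A A' φ f

/-- A group `G` is weakly separable: every algebraic isomorphism from an S-ring
over `G` to an S-ring over a group isomorphic to `G` is induced by a
combinatorial isomorphism. -/
def WeaklySeparable (G : Type*) [Group G] [Fintype G] [DecidableEq G] : Prop :=
  ∀ (A : SRing G) (H : Type) [Group H] [Fintype H] [DecidableEq H],
    Nonempty (G ≃* H) →
      ∀ (A' : SRing H) (φ : Finset G → Finset H),
        IsAlgIso A A' φ → ∃ f : G → H, InducedBy A A' φ f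

/-- An S-ring is schurian if its basic sets are the orbits of the stabilizer of the
identity in some permutation group `K` with `G_right ≤ K ≤ Sym(G)`. -/
def SRing.IsSchurian {G : Type*} [Group G] [Fintype G] [DecidableEq G]
    (A : SRing G) : Prop :=
  ∃ K : Subgroup (Equiv.Perm G), (∀ g : G, Equiv.mulRight g ∈ K) ∧
    ∀ X : Finset G, X ∈ A.basicSets ↔
      ∃ g : G, (X : Set G) = MulAction.orbit (MulAction.stabilizer K (1 : G)) g

/-- A finite group is a Schur group if every S-ring over it is schurian. -/
def IsSchurGroup (G : Type*) [Group G] [Fintype G] [DecidableEq G] : Prop :=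
  ∀ A : SRing G, A.IsSchurian

/-- A group is elementary abelian if it is abelian and of exponent dividing a prime,
equivalently isomorphic to `(C_p)^k` for some prime `p` and `k ≥ 0`. -/
def IsElementaryAbelian (G : Type*) [Group G] : Prop :=
  (∀ a b : G, a * b = b * a) ∧ ∃ p : ℕ, p.Prime ∧ ∀ g : G, g ^ p = 1

/-- `Ω(n)`, the number of prime divisors of `n` counted with multiplicity. -/
def bigOmega (n : ℕ) : ℕ := n.primeFactorsList.length

/-- `Ω*(n) = Ω(n)` for odd `n` and `Ω*(n) = Ω(n/2)` for even `n`. -/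
def OmegaStar (n : ℕ) : ℕ := if 2 ∣ n then bigOmega (n / 2) else bigOmega n


section Helpers
variable {G : Type*} [Group G] [DecidableEq G]

lemma cnt_filter_left (X Y : Finset G) (z : G) :
    cnt X Y z = (X.filter fun x => x⁻¹ * z ∈ Y).card := by
  unfold cnt
  apply Finset.card_bij (fun p _ => p.1)
  · rintro ⟨x, y⟩ hp
    simp only [Finset.mem_filter, Finset.mem_product] at hp ⊢
    obtain ⟨⟨h1, h2⟩, h3⟩ := hp
    refine ⟨h1, ?_⟩
    rw [← h3]; simpa using h2
  · rintro ⟨x1, y1⟩ h1 ⟨x2, y2⟩ h2 h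
    simp only [Finset.mem_filter, Finset.mem_product] at h1 h2
    cases h
    have : y1 = y2 := by
      have := h1.2.trans h2.2.symm
      exact mul_left_cancel this
    simp [this]
  · intro x hx
    simp only [Finset.mem_filter] at hx
    exact ⟨⟨x, x⁻¹ * z⟩, by simp [Finset.mem_filter, hx.1, hx.2], rfl⟩

lemma cnt_filter_right (X Y : Finset G) (z : G) :
    cnt X Y z = (Y.filter fun y => z * y⁻¹ ∈ X).card := by
  unfold cnt
  apply Finset.card_bij (fun p _ => p.2)
  · rintro ⟨x, y⟩ hp
    simp only [Finset.mem_filter, Finset.mem_product] at hp ⊢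
    obtain ⟨⟨h1, h2⟩, h3⟩ := hp
    refine ⟨h2, ?_⟩
    rw [← h3]; simpa using h1
  · rintro ⟨x1, y1⟩ h1 ⟨x2, y2⟩ h2 h
    simp only [Finset.mem_filter, Finset.mem_product] at h1 h2
    cases h
    have : x1 = x2 := by
      have := h1.2.trans h2.2.symm
      exact mul_right_cancel this
    simp [this]
  · intro y hy
    simp only [Finset.mem_filter] at hy
    exact ⟨⟨z * y⁻¹, y⟩, by simp [Finset.mem_filter, hy.1, hy.2], rfl⟩

end Helpers

section Helpers2
set_option linter.unusedSectionVars false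
open Pointwise
open scoped Classical
variable {G : Type*} [Group G] [DecidableEq G] {H : Subgroup G}

lemma mem_coset_iff {g w : G} {S : Finset G} (hS : (S : Set G) = g • (H : Set G)) :
    w ∈ S ↔ g⁻¹ * w ∈ H := by
  rw [← Finset.mem_coe, hS, Set.mem_smul_set_iff_inv_smul_mem, smul_eq_mul]
  rfl

lemma conj_iff (hH : H.Normal) (a c : G) : a ∈ H ↔ c⁻¹ * a * c ∈ H := by
  constructor
  · intro h
    simpa using hH.conj_mem a h c⁻¹
  · intro h
    have := hH.conj_mem _ h c
    have e : c * (c⁻¹ * a * c) * c⁻¹ = a := by group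
    rwa [e] at this

lemma cnt_coset_right (hH : H.Normal) (X Y : Finset G) (g : G)
    (hX : ∀ x ∈ X, x ∈ H) (hY : (Y : Set G) = g • (H : Set G)) (z : G) :
    cnt X Y z = if g⁻¹ * z ∈ H then X.card else 0 := by
  rw [cnt_filter_left]
  have key : ∀ x ∈ X, (x⁻¹ * z ∈ Y ↔ g⁻¹ * z ∈ H) := by
    intro x hx
    rw [mem_coset_iff hY]
    have e : g⁻¹ * (x⁻¹ * z) = (g⁻¹ * x⁻¹ * g) * (g⁻¹ * z) := by group
    rw [e]
    have hc : g⁻¹ * x⁻¹ * g ∈ H := by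
      have := (conj_iff hH x⁻¹ g).mp (H.inv_mem (hX x hx))
      simpa [mul_assoc] using this
    exact H.mul_mem_cancel_left hc
  split_ifs with h
  · rw [Finset.filter_true_of_mem fun x hx => (key x hx).mpr h]
  · rw [Finset.filter_false_of_mem fun x hx => fun hc => h ((key x hx).mp hc), Finset.card_empty]

end Helpers2

section Helpers3
set_option linter.unusedSectionVars false
open Pointwise
open scoped Classical
variable {G : Type*} [Group G] [DecidableEq G] {H : Subgroup G}

lemma cnt_coset_left (hH : H.Normal) (X Y : Finset G) (g : G)
    (hX : (X : Set G) = g • (H : Set G)) (hY : ∀ y ∈ Y, y ∈ H) (z : G) :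
    cnt X Y z = if g⁻¹ * z ∈ H then Y.card else 0 := by
  rw [cnt_filter_right]
  have key : ∀ y ∈ Y, (z * y⁻¹ ∈ X ↔ g⁻¹ * z ∈ H) := by
    intro y hy
    rw [mem_coset_iff hX]
    have e : g⁻¹ * (z * y⁻¹) = (g⁻¹ * z) * y⁻¹ := by group
    rw [e]
    exact H.mul_mem_cancel_right (H.inv_mem (hY y hy))
  split_ifs with h
  · rw [Finset.filter_true_of_mem fun y hy => (key y hy).mpr h]
  · rw [Finset.filter_false_of_mem fun y hy => fun hc => h ((key y hy).mp hc), Finset.card_empty]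

lemma cnt_coset_both (hH : H.Normal) (X Y : Finset G) (g g' : G)
    (hX : (X : Set G) = g • (H : Set G)) (hY : (Y : Set G) = g' • (H : Set G)) (z : G) :
    cnt X Y z = if (g * g')⁻¹ * z ∈ H then Y.card else 0 := by
  rw [cnt_filter_right]
  have key : ∀ y ∈ Y, (z * y⁻¹ ∈ X ↔ (g * g')⁻¹ * z ∈ H) := by
    intro y hy
    rw [mem_coset_iff hX]
    have hu : g'⁻¹ * y ∈ H := (mem_coset_iff hY).mp hy
    have e : g⁻¹ * (z * y⁻¹) = (g⁻¹ * z * g'⁻¹) * (g' * (g'⁻¹ * y)⁻¹ * g'⁻¹) := by group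
    have hc : g' * (g'⁻¹ * y)⁻¹ * g'⁻¹ ∈ H := hH.conj_mem _ (H.inv_mem hu) g'
    rw [e, H.mul_mem_cancel_right hc]
    rw [conj_iff hH (g⁻¹ * z * g'⁻¹) g']
    constructor
    · intro h; have e2 : g'⁻¹ * (g⁻¹ * z * g'⁻¹) * g' = (g * g')⁻¹ * z := by group
      rwa [e2] at h
    · intro h; have e2 : g'⁻¹ * (g⁻¹ * z * g'⁻¹) * g' = (g * g')⁻¹ * z := by group
      rwa [e2]
  split_ifs with h
  · rw [Finset.filter_true_of_mem fun y hy => (key y hy).mpr h]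
  · rw [Finset.filter_false_of_mem fun y hy => fun hc => h ((key y hy).mp hc), Finset.card_empty]

variable [Fintype G]

lemma cnt_image (X Y : Finset H) (z : H) :
    cnt (X.image ((↑) : H → G)) (Y.image ((↑) : H → G)) (z : G) = cnt X Y z := by
  rw [cnt_filter_left, cnt_filter_left]
  rw [Finset.filter_image]
  rw [Finset.card_image_of_injective _ Subtype.coe_injective]
  congr 1
  apply Finset.filter_congr
  intro x hx
  have e : ((x : G))⁻¹ * (z : G) = ((x⁻¹ * z : H) : G) := by push_cast; ring_nf
  rw [e]
  exact Finset.mem_image.trans ⟨fun ⟨a, ha, he⟩ => Subtype.coe_injective he ▸ ha, fun h => ⟨_, h, rfl⟩⟩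

lemma cnt_image_zero (X Y : Finset H) (z : G) (hz : z ∉ H) :
    cnt (X.image ((↑) : H → G)) (Y.image ((↑) : H → G)) z = 0 := by
  rw [cnt_filter_left, Finset.card_eq_zero]
  rw [Finset.filter_eq_empty_iff]
  intro u hu hmem
  obtain ⟨x, hx, rfl⟩ := Finset.mem_image.mp hu
  obtain ⟨y, hy, he⟩ := Finset.mem_image.mp hmem
  apply hz
  have : z = (x : G) * (y : G) := by rw [he]; group
  rw [this]
  exact H.mul_mem x.2 y.2

end Helpers3

section Helpers4
set_option linter.unusedSectionVars false
open scoped Classical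

lemma algIso_one_eq {H : Type*} [Group H] [Fintype H] [DecidableEq H]
    (B B' : SRing H) (φ : Finset H → Finset H) (hφ : IsAlgIso B B' φ) :
    φ ({1} : Finset H) = {1} := by
  obtain ⟨X₀, hX₀, hX₀e⟩ := hφ.1.2.2 (B'.one_mem)
  rw [Finset.mem_coe] at hX₀
  obtain ⟨z, hz⟩ := B.nonempty_mem X₀ hX₀
  have h1 : cnt ({1} : Finset H) X₀ z = 1 := by
    rw [cnt_filter_left, Finset.filter_singleton]
    simp [hz]
  have h2 := hφ.2 {1} B.one_mem X₀ hX₀ X₀ hX₀ z hz 1 (by rw [hX₀e]; simp)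
  rw [h1, hX₀e, cnt_filter_left] at h2
  have h3 : (1 : H) ∈ φ {1} := by
    by_contra hne
    rw [Finset.filter_eq_empty_iff.mpr ?_] at h2
    · simp at h2
    · intro x hx hc
      simp only [Finset.mem_singleton] at hc
      have : x = 1 := by
        have : x⁻¹ * 1 = 1 := hc
        simpa using this
      exact hne (this ▸ hx)
  have hφ1 : φ {1} ∈ B'.basicSets := hφ.1.1 (by exact_mod_cast B.one_mem)
  by_contra hne
  have hd := B'.pairwise_disjoint _ hφ1 _ B'.one_mem hne
  exact (Finset.disjoint_left.mp hd h3) (Finset.mem_singleton_self 1)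

lemma algIso_card_eq {H : Type*} [Group H] [Fintype H] [DecidableEq H]
    (B B' : SRing H) (φ : Finset H → Finset H) (hφ : IsAlgIso B B' φ) :
    ∀ X ∈ B.basicSets, (φ X).card = X.card := by
  have hone := algIso_one_eq B B' φ hφ
  -- pointwise inequality
  have hle : ∀ X ∈ B.basicSets, X.card ≤ (φ X).card := by
    intro X hX
    have h1 : cnt X X⁻¹ (1 : H) = X.card := by
      rw [cnt_filter_left]
      rw [Finset.filter_true_of_mem]
      intro x hx
      simpa using Finset.inv_mem_inv hx
    have h2 := hφ.2 X hX X⁻¹ (B.inv_mem X hX) {1} B.one_mem 1 (Finset.mem_singleton_self 1)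
      1 (by rw [hone]; exact Finset.mem_singleton_self 1)
    rw [h1, cnt_filter_left] at h2
    calc X.card = _ := h2
    _ ≤ (φ X).card := Finset.card_filter_le _ _
  -- partition sums
  have hpart : ∀ (C : SRing H), ∑ X ∈ C.basicSets, X.card = Fintype.card H := by
    intro C
    rw [← Finset.card_biUnion (fun X hX Y hY hne => C.pairwise_disjoint X hX Y hY hne)]
    rw [← Finset.card_univ]
    congr 1
    apply Finset.eq_univ_of_forall
    intro g
    obtain ⟨X, hX, hg⟩ := C.exists_mem g
    exact Finset.mem_biUnion.mpr ⟨X, hX, hg⟩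
  have himg : B.basicSets.image φ = B'.basicSets := by
    apply Finset.ext
    intro W
    rw [Finset.mem_image]
    constructor
    · rintro ⟨X, hX, rfl⟩
      exact_mod_cast hφ.1.1 (by exact_mod_cast hX)
    · intro hW
      obtain ⟨X, hX, he⟩ := hφ.1.2.2 (by exact_mod_cast hW)
      exact ⟨X, by exact_mod_cast hX, he⟩
  have hsum : ∑ X ∈ B.basicSets, (φ X).card = ∑ X ∈ B.basicSets, X.card := by
    rw [hpart B]
    rw [← Finset.sum_image (f := fun W => W.card) (g := φ) ?_]
    · rw [himg, hpart B']
    · intro x hx y hy he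
      exact hφ.1.2.1 (by exact_mod_cast hx) (by exact_mod_cast hy) he
  intro X hX
  by_contra hne
  have hlt : X.card < (φ X).card := lt_of_le_of_ne (hle X hX) (Ne.symm hne)
  have := Finset.sum_lt_sum (fun i hi => hle i hi) ⟨X, hX, hlt⟩
  omega
end Helpers4

/-- Let `H ⊴ G`, `ℬ` an S-ring over `H`, and `𝒜 = ℬ ≀ ℤ(G/H)` the
S-ring over `G` whose basic sets are the basic sets of `ℬ` together with the cosets
`gH`, `g ∈ G \ H`. If `φ` is an algebraic automorphism of `ℬ` not induced by a
combinatorial isomorphism, then there is an algebraic automorphism `ψ` of `𝒜`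
restricting to `φ` on the basic sets of `ℬ` and not induced by a combinatorial
isomorphism. -/

theorem wreath_algAut_not_induced (G : Type) [Group G] [Fintype G] [DecidableEq G]
    (H : Subgroup G) (hH : H.Normal) [Fintype H] (B : SRing H) (A : SRing G)
    (hA : ∀ X : Finset G, X ∈ A.basicSets ↔
      ((∃ Y ∈ B.basicSets, X = Finset.image ((↑) : H → G) Y) ∨
        (∃ g : G, g ∉ H ∧ (X : Set G) = g • (H : Set G))))
    (φ : Finset H → Finset H) (hφ : IsAlgIso B B φ)
    (hni : ¬ ∃ f : H → H, InducedBy B B φ f) :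
    ∃ ψ : Finset G → Finset G, IsAlgIso A A ψ ∧
      (∀ Y ∈ B.basicSets, ψ (Finset.image ((↑) : H → G) Y) =
        Finset.image ((↑) : H → G) (φ Y)) ∧
      ¬ ∃ f : G → G, InducedBy A A ψ f := by
  classical
  have hinj : Function.Injective ((↑) : H → G) := Subtype.coe_injective
  have himg_inj : Function.Injective (Finset.image ((↑) : H → G)) :=
    Finset.image_injective hinj
  have hcard : ∀ Y ∈ B.basicSets, (φ Y).card = Y.card := algIso_card_eq B B φ hφ
  set ψ : Finset G → Finset G := fun X =>
    if h : ∃ Y ∈ B.basicSets, X = Finset.image ((↑) : H → G) Y then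
      Finset.image ((↑) : H → G) (φ h.choose) else X with hψdef
  have hψ_img : ∀ Y ∈ B.basicSets,
      ψ (Finset.image ((↑) : H → G) Y) = Finset.image ((↑) : H → G) (φ Y) := by
    intro Y hY
    have h : ∃ Y' ∈ B.basicSets, Finset.image ((↑) : H → G) Y
        = Finset.image ((↑) : H → G) Y' := ⟨Y, hY, rfl⟩
    rw [hψdef]
    simp only [dif_pos h]
    congr 2
    exact (himg_inj h.choose_spec.2).symm
  have hψ_id : ∀ X : Finset G, (¬ ∃ Y ∈ B.basicSets, X = Finset.image ((↑) : H → G) Y)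
      → ψ X = X := fun X h => dif_neg h
  -- exclusivity
  have hexcl : ∀ (Y : Finset H), Y.Nonempty → ∀ g : G, g ∉ H →
      ((Finset.image ((↑) : H → G) Y : Finset G) : Set G) ≠ g • (H : Set G) := by
    intro Y ⟨y, hy⟩ g hg hc
    apply hg
    have hmem : (y : G) ∈ Finset.image ((↑) : H → G) Y := Finset.mem_image_of_mem _ hy
    have := (mem_coset_iff hc).mp hmem
    have := H.mul_mem this (H.inv_mem y.2)
    simpa using H.inv_mem this
  have hdichot : ∀ X ∈ A.basicSets,
      (¬ ∃ Y ∈ B.basicSets, X = Finset.image ((↑) : H → G) Y) →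
      ∃ g : G, g ∉ H ∧ (X : Set G) = g • (H : Set G) := by
    intro X hX hnP
    rcases (hA X).mp hX with h | h
    · exact absurd h hnP
    · exact h
  have himg_memA : ∀ Y ∈ B.basicSets, Finset.image ((↑) : H → G) Y ∈ A.basicSets :=
    fun Y hY => (hA _).mpr (Or.inl ⟨Y, hY, rfl⟩)
  refine ⟨ψ, ⟨?_, ?_⟩, hψ_img, ?_⟩
  · -- BijOn
    constructor
    · -- MapsTo
      intro X hX
      rw [Finset.mem_coe] at *
      by_cases hP : ∃ Y ∈ B.basicSets, X = Finset.image ((↑) : H → G) Y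
      · obtain ⟨Y, hY, rfl⟩ := hP
        rw [hψ_img Y hY]
        exact himg_memA _ (hφ.1.1 hY)
      · rw [hψ_id X hP]; exact hX
    constructor
    · -- InjOn
      intro X₁ h₁ X₂ h₂ he
      rw [Finset.mem_coe] at h₁ h₂
      by_cases hP₁ : ∃ Y ∈ B.basicSets, X₁ = Finset.image ((↑) : H → G) Y
      · obtain ⟨Y₁, hY₁, rfl⟩ := hP₁
        by_cases hP₂ : ∃ Y ∈ B.basicSets, X₂ = Finset.image ((↑) : H → G) Y
        · obtain ⟨Y₂, hY₂, rfl⟩ := hP₂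
          rw [hψ_img Y₁ hY₁, hψ_img Y₂ hY₂] at he
          rw [hφ.1.2.1 hY₁ hY₂ (himg_inj he)]
        · obtain ⟨g, hg, hc⟩ := hdichot X₂ h₂ hP₂
          rw [hψ_img Y₁ hY₁, hψ_id X₂ hP₂] at he
          exact absurd (he ▸ hc)
            (hexcl (φ Y₁) (B.nonempty_mem _ (hφ.1.1 hY₁)) g hg)
      · by_cases hP₂ : ∃ Y ∈ B.basicSets, X₂ = Finset.image ((↑) : H → G) Y
        · obtain ⟨Y₂, hY₂, rfl⟩ := hP₂
          obtain ⟨g, hg, hc⟩ := hdichot X₁ h₁ hP₁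
          rw [hψ_img Y₂ hY₂, hψ_id X₁ hP₁] at he
          exact absurd (he ▸ hc)
            (hexcl (φ Y₂) (B.nonempty_mem _ (hφ.1.1 hY₂)) g hg)
        · rw [hψ_id X₁ hP₁, hψ_id X₂ hP₂] at he
          exact he
    · -- SurjOn
      intro W hW
      rw [Finset.mem_coe] at hW
      rcases (hA W).mp hW with ⟨Y', hY', rfl⟩ | ⟨g, hg, hc⟩
      · obtain ⟨Y, hY, he⟩ := hφ.1.2.2 (by exact_mod_cast hY')
        rw [Finset.mem_coe] at hY
        refine ⟨Finset.image ((↑) : H → G) Y, ?_, ?_⟩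
        · exact Finset.mem_coe.mpr (himg_memA Y hY)
        · rw [hψ_img Y hY, he]
      · have hnP : ¬ ∃ Y ∈ B.basicSets, W = Finset.image ((↑) : H → G) Y := by
          rintro ⟨Y, hY, rfl⟩
          exact hexcl Y (B.nonempty_mem Y hY) g hg hc
        exact ⟨W, Finset.mem_coe.mpr hW, hψ_id W hnP⟩

  · -- structure constants
    intro X hX Y hY Z hZ z hz z' hz'
    have hsubH : ∀ (T : Finset H), ∀ x ∈ Finset.image ((↑) : H → G) T, x ∈ H := by
      intro T x hx
      obtain ⟨t, _, rfl⟩ := Finset.mem_image.mp hx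
      exact t.2
    -- z⁻¹ * z' ∈ H
    have hzz' : z⁻¹ * z' ∈ H := by
      by_cases hPZ : ∃ Y ∈ B.basicSets, Z = Finset.image ((↑) : H → G) Y
      · obtain ⟨Z₀, hZ₀, rfl⟩ := hPZ
        rw [hψ_img Z₀ hZ₀] at hz'
        exact H.mul_mem (H.inv_mem (hsubH Z₀ z hz)) (hsubH (φ Z₀) z' hz')
      · obtain ⟨g, hg, hc⟩ := hdichot Z hZ hPZ
        rw [hψ_id Z hPZ] at hz'
        have h1 := (mem_coset_iff hc).mp hz
        have h2 := (mem_coset_iff hc).mp hz'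
        have := H.mul_mem (H.inv_mem h1) h2
        simpa [mul_assoc] using this
    have hcond : ∀ c : G, (c * z ∈ H ↔ c * z' ∈ H) := by
      intro c
      constructor
      · intro h
        have := H.mul_mem h hzz'
        simpa [mul_assoc] using this
      · intro h
        have := H.mul_mem h (H.inv_mem hzz')
        have e : c * z' * (z⁻¹ * z')⁻¹ = c * z := by group
        rwa [e] at this
    by_cases hPX : ∃ Y ∈ B.basicSets, X = Finset.image ((↑) : H → G) Y
    · obtain ⟨X₀, hX₀, rfl⟩ := hPX
      rw [hψ_img X₀ hX₀]
      by_cases hPY : ∃ Y' ∈ B.basicSets, Y = Finset.image ((↑) : H → G) Y'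
      · -- case a : both from B
        obtain ⟨Y₀, hY₀, rfl⟩ := hPY
        rw [hψ_img Y₀ hY₀]
        by_cases hPZ : ∃ Y' ∈ B.basicSets, Z = Finset.image ((↑) : H → G) Y'
        · obtain ⟨Z₀, hZ₀, rfl⟩ := hPZ
          rw [hψ_img Z₀ hZ₀] at hz'
          obtain ⟨z₀, hz₀, rfl⟩ := Finset.mem_image.mp hz
          obtain ⟨z₀', hz₀', rfl⟩ := Finset.mem_image.mp hz'
          rw [cnt_image, cnt_image]
          exact hφ.2 X₀ hX₀ Y₀ hY₀ Z₀ hZ₀ z₀ hz₀ z₀' hz₀'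
        · obtain ⟨g, hg, hc⟩ := hdichot Z hZ hPZ
          rw [hψ_id Z hPZ] at hz'
          have hzH : z ∉ H := by
            intro hmem
            have := (mem_coset_iff hc).mp hz
            exact hg (by simpa using H.inv_mem (H.mul_mem this (H.inv_mem hmem)))
          have hzH' : z' ∉ H := by
            intro hmem
            have := (mem_coset_iff hc).mp hz'
            exact hg (by simpa using H.inv_mem (H.mul_mem this (H.inv_mem hmem)))
          rw [cnt_image_zero _ _ z hzH, cnt_image_zero _ _ z' hzH']
      · -- case b : X from B, Y coset
        obtain ⟨g, hg, hc⟩ := hdichot Y hY hPY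
        rw [hψ_id Y hPY]
        rw [cnt_coset_right hH _ _ g (hsubH X₀) hc z,
          cnt_coset_right hH _ _ g (hsubH (φ X₀)) hc z']
        rw [Finset.card_image_of_injective _ hinj, Finset.card_image_of_injective _ hinj,
          hcard X₀ hX₀]
        congr 1
        · exact propext (hcond g⁻¹)
    · obtain ⟨g, hg, hc⟩ := hdichot X hX hPX
      rw [hψ_id X hPX]
      by_cases hPY : ∃ Y' ∈ B.basicSets, Y = Finset.image ((↑) : H → G) Y'
      · -- case c : X coset, Y from B
        obtain ⟨Y₀, hY₀, rfl⟩ := hPY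
        rw [hψ_img Y₀ hY₀]
        rw [cnt_coset_left hH _ _ g hc (hsubH Y₀) z,
          cnt_coset_left hH _ _ g hc (hsubH (φ Y₀)) z']
        rw [Finset.card_image_of_injective _ hinj, Finset.card_image_of_injective _ hinj,
          hcard Y₀ hY₀]
        congr 1
        · exact propext (hcond g⁻¹)
      · -- case d : both cosets
        obtain ⟨g', hg', hc'⟩ := hdichot Y hY hPY
        rw [hψ_id Y hPY]
        rw [cnt_coset_both hH _ _ g g' hc hc' z, cnt_coset_both hH _ _ g g' hc hc' z']
        congr 1
        · exact propext (hcond (g * g')⁻¹)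

  · -- not induced
    rintro ⟨f, ⟨⟨finj, fsurj⟩, -⟩, hR⟩
    apply hni
    -- key fact
    have key : ∀ Y ∈ B.basicSets, ∀ y ∈ Y, ∀ k : H,
        ∃ y' ∈ φ Y, f ((y : G) * (k : G)) = (y' : G) * f (k : G) := by
      intro Y hY y hy k
      have hXA : Finset.image ((↑) : H → G) Y ∈ A.basicSets := himg_memA Y hY
      have hmem : ((k : G), (y : G) * (k : G)) ∈ RSet (Finset.image ((↑) : H → G) Y) :=
        ⟨(y : G), Finset.mem_image_of_mem _ hy, (k : G), rfl⟩
      have hmem2 : (f (k : G), f ((y : G) * (k : G))) ∈ RSet (ψ (Finset.image ((↑) : H → G) Y)) := by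
        rw [hR _ hXA]
        exact ⟨((k : G), (y : G) * (k : G)), hmem, rfl⟩
      rw [hψ_img Y hY] at hmem2
      obtain ⟨x, hx, g, hg⟩ := hmem2
      obtain ⟨y', hy', rfl⟩ := Finset.mem_image.mp hx
      have h1 : f (k : G) = g := congrArg Prod.fst hg
      have h2 : f ((y : G) * (k : G)) = (y' : G) * g := congrArg Prod.snd hg
      exact ⟨y', hy', by rw [h2, h1]⟩
    have hmemH : ∀ h : H, f (h : G) * (f 1)⁻¹ ∈ H := by
      intro h
      obtain ⟨Y, hY, hmem⟩ := B.exists_mem h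
      obtain ⟨y', hy', he⟩ := key Y hY h hmem 1
      simp only [OneMemClass.coe_one, mul_one] at he
      rw [he]
      simpa using y'.2
    set f' : H → H := fun h => ⟨f (h : G) * (f 1)⁻¹, hmemH h⟩ with hf'def
    have hf'c : ∀ h : H, (f' h : G) = f (h : G) * (f 1)⁻¹ := fun h => rfl
    have hf'inj : Function.Injective f' := by
      intro a b hab
      have : f (a : G) * (f 1)⁻¹ = f (b : G) * (f 1)⁻¹ := congrArg ((↑) : H → G) hab
      exact hinj (finj (mul_right_cancel this))
    have hf'bij : Function.Bijective f' := Finite.injective_iff_bijective.mp hf'inj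
    -- f' relates basic graphs
    have hR' : ∀ Y ∈ B.basicSets, RSet (φ Y) = Prod.map f' f' '' RSet Y := by
      intro Y hY
      ext p
      constructor
      · rintro ⟨y', hy', k', rfl⟩
        obtain ⟨k, rfl⟩ := hf'bij.2 k'
        -- find the preimage pair
        have hco : (f (k : G), (y' : G) * f (k : G)) ∈
            Prod.map f f '' RSet (Finset.image ((↑) : H → G) Y) := by
          rw [← hR _ (himg_memA Y hY), hψ_img Y hY]
          exact ⟨(y' : G), Finset.mem_image_of_mem _ hy', f (k : G), rfl⟩
        obtain ⟨⟨a, b⟩, hab, heq⟩ := hco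
        obtain ⟨x, hx, g, hg⟩ := hab
        have ha : a = g := congrArg Prod.fst hg
        have hb : b = x * g := congrArg Prod.snd hg
        have hfa : f a = f (k : G) := congrArg Prod.fst heq
        have hfb : f b = (y' : G) * f (k : G) := congrArg Prod.snd heq
        have hak : a = (k : G) := finj hfa
        obtain ⟨y₀, hy₀, rfl⟩ := Finset.mem_image.mp hx
        have hbval : ((y₀ : G)) * (k : G) = b := by rw [hb, ← ha, hak]
        have hfy : f' (y₀ * k) = y' * f' k := by
          apply hinj
          push_cast [hf'c]
          rw [hbval, hfb]
          group
        exact ⟨(k, y₀ * k), ⟨y₀, hy₀, k, rfl⟩, by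
          simp only [Prod.map_apply]
          rw [hfy]⟩
      · rintro ⟨⟨k, b⟩, ⟨y, hy, k₂, heq⟩, rfl⟩
        have hk : k = k₂ := congrArg Prod.fst heq
        have hb : b = y * k₂ := congrArg Prod.snd heq
        subst hk
        obtain ⟨y', hy', he⟩ := key Y hY y hy k
        refine ⟨y', hy', f' k, ?_⟩
        have hfy : f' b = y' * f' k := by
          apply hinj
          push_cast [hf'c, hb]
          rw [he]
          group
        simp only [Prod.map_apply]
        rw [hfy]
    refine ⟨f', ⟨hf'bij, ?_⟩, fun Y hY => hR' Y hY⟩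
    ext S
    simp only [Set.mem_setOf_eq]
    constructor
    · rintro ⟨X, hX, rfl⟩
      exact ⟨φ X, hφ.1.1 hX, (hR' X hX).symm⟩
    · rintro ⟨X', hX', rfl⟩
      obtain ⟨X, hX, rfl⟩ := hφ.1.2.2 (Finset.mem_coe.mpr hX')
      exact ⟨X, hX, hR' X hX⟩
end

section
/- Let 𝒜 be a schurian S-ring over a finite group G and let K be a subgroup of Iso(𝒜), the group of all combinatorial isomorphisms from 𝒜 to itself. Let Φ = {φ_f : f ∈ K}, a subgroup of the group of algebraic automorphisms of 𝒜. Then the algebraic fusion 𝒜^Φ — the S-ring over G whose basic sets are the sets X^Φ = ∪_{φ∈Φ} φ(X) for X ∈ 𝒮(𝒜) — is also schurian. -/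
open Pointwise

section FusionAux

variable {G : Type*} [Group G]

lemma mem_RSet_iff (X : Finset G) (p : G × G) : p ∈ RSet X ↔ p.2 * p.1⁻¹ ∈ X := by
  constructor
  · rintro ⟨x, hx, g, rfl⟩
    simpa using hx
  · intro h
    exact ⟨p.2 * p.1⁻¹, h, p.1, by simp⟩

lemma RSet_injective {X Y : Finset G} (h : RSet X = RSet Y) : X = Y := by
  ext y
  constructor <;> intro hy
  · have h1 : ((1:G), y) ∈ RSet X := (mem_RSet_iff X _).2 (by simpa using hy)
    rw [h] at h1
    simpa using (mem_RSet_iff Y _).1 h1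
  · have h1 : ((1:G), y) ∈ RSet Y := (mem_RSet_iff Y _).2 (by simpa using hy)
    rw [← h] at h1
    simpa using (mem_RSet_iff X _).1 h1

lemma prodmap_comp_image (f g : G → G) (S : Set (G × G)) :
    Prod.map f f '' (Prod.map g g '' S) = Prod.map (f ∘ g) (f ∘ g) '' S := by
  rw [← Set.image_comp, Prod.map_comp_map]

/-- The group of permutations fixing each relation `R(W)`, `W ∈ B`, setwise. -/
def relAut (B : Finset (Finset G)) : Subgroup (Equiv.Perm G) where
  carrier := {σ | ∀ W ∈ B, Prod.map ⇑σ ⇑σ '' RSet W = RSet W}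
  one_mem' := by intro W hW; simp
  mul_mem' := by
    intro σ τ hσ hτ W hW
    rw [Equiv.Perm.coe_mul, ← prodmap_comp_image, hτ W hW, hσ W hW]
  inv_mem' := by
    intro σ hσ W hW
    conv_lhs => rw [← hσ W hW]
    rw [prodmap_comp_image]
    have h : (⇑σ⁻¹ ∘ ⇑σ) = id := by ext x; simp
    rw [h, Prod.map_id, Set.image_id]

lemma mem_relAut {B : Finset (Finset G)} {σ : Equiv.Perm G} :
    σ ∈ relAut B ↔ ∀ W ∈ B, Prod.map ⇑σ ⇑σ '' RSet W = RSet W := Iff.rfl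

end FusionAux

/-- Let `𝒜` be a schurian S-ring over `G`, `K ≤ Iso(𝒜)` a group of
combinatorial automorphisms of `𝒜`, and for `f ∈ K` let `ψ f = φ_f` be the induced
algebraic automorphism. Then the algebraic fusion `𝒜^Φ`, `Φ = {φ_f : f ∈ K}`, whose
basic sets are the unions `X^Φ = ⋃_{f ∈ K} φ_f(X)` for `X ∈ 𝒮(𝒜)`, is schurian. -/
theorem algebraic_fusion_schurian (G : Type) [Group G] [Fintype G] [DecidableEq G]
    (A : SRing G) (hA : A.IsSchurian) (K : Subgroup (Equiv.Perm G))
    (hK : ∀ f ∈ K, IsCombIso A A ⇑f)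
    (ψ : Equiv.Perm G → Finset G → Finset G)
    (hψ : ∀ f ∈ K, InducedBy A A (ψ f) ⇑f)
    (A' : SRing G)
    (hA' : ∀ W : Finset G, W ∈ A'.basicSets ↔ ∃ X ∈ A.basicSets,
      (W : Set G) = ⋃ f ∈ (K : Set (Equiv.Perm G)), ((ψ f X : Finset G) : Set G)) :
    A'.IsSchurian := by
  classical
  obtain ⟨M, hMright, hMorb⟩ := hA
  set L : Subgroup (Equiv.Perm G) := relAut A'.basicSets with hLdef
  have coe_smulM : ∀ (τ : MulAction.stabilizer M (1:G)) (y : G), τ • y = τ.1.1 y :=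
    fun _ _ => rfl
  have coe_smulL : ∀ (k : MulAction.stabilizer L (1:G)) (y : G), k • y = k.1.1 y :=
    fun _ _ => rfl
  have hψR : ∀ f ∈ K, ∀ X ∈ A.basicSets, RSet (ψ f X) = Prod.map ⇑f ⇑f '' RSet X :=
    fun f hf => (hψ f hf).2
  have hψmem : ∀ f ∈ K, ∀ X ∈ A.basicSets, ψ f X ∈ A.basicSets := by
    intro f hf X hX
    have hfam := (hK f hf).2
    have hx : Prod.map ⇑f ⇑f '' RSet X ∈
        {S : Set (G × G) | ∃ X' ∈ A.basicSets, S = RSet X'} := by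
      rw [← hfam]; exact ⟨X, hX, rfl⟩
    obtain ⟨X', hX', hS⟩ := hx
    have heq : ψ f X = X' := RSet_injective (by rw [hψR f hf X hX, hS])
    rwa [heq]
  have hWunion : ∀ W ∈ A'.basicSets, ∃ X ∈ A.basicSets,
      RSet W = ⋃ f ∈ (K : Set (Equiv.Perm G)), RSet (ψ f X) := by
    intro W hW
    obtain ⟨X, hX, hXW⟩ := (hA' W).1 hW
    refine ⟨X, hX, ?_⟩
    ext p
    rw [mem_RSet_iff]
    have h1 : p.2 * p.1⁻¹ ∈ W ↔ p.2 * p.1⁻¹ ∈ (W : Set G) := by simp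
    rw [h1, hXW]
    simp only [Set.mem_iUnion, SetLike.mem_coe, Finset.mem_coe]
    constructor
    · rintro ⟨f, hf, hmem⟩
      exact ⟨f, hf, (mem_RSet_iff _ _).2 hmem⟩
    · rintro ⟨f, hf, hmem⟩
      exact ⟨f, hf, (mem_RSet_iff _ _).1 hmem⟩
  have hKL : ∀ f ∈ K, f ∈ L := by
    intro f hf
    rw [hLdef, mem_relAut]
    intro W hW
    obtain ⟨X, hX, hRW⟩ := hWunion W hW
    rw [hRW, Set.image_iUnion₂]
    ext p
    simp only [Set.mem_iUnion, SetLike.mem_coe]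
    constructor
    · rintro ⟨f', hf', hp⟩
      refine ⟨f * f', mul_mem hf hf', ?_⟩
      rw [hψR _ (mul_mem hf hf') X hX, Equiv.Perm.coe_mul, ← prodmap_comp_image,
        ← hψR f' hf' X hX]
      exact hp
    · rintro ⟨f', hf', hp⟩
      refine ⟨f⁻¹ * f', mul_mem (inv_mem hf) hf', ?_⟩
      rw [hψR _ (mul_mem (inv_mem hf) hf') X hX, prodmap_comp_image, ← Equiv.Perm.coe_mul,
        mul_inv_cancel_left, ← hψR f' hf' X hX]
      exact hp
  have hMfixY : ∀ σ ∈ M, ∀ Y ∈ A.basicSets, ∀ p ∈ RSet Y,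
      ((σ p.1 : G), (σ p.2 : G)) ∈ RSet Y := by
    intro σ hσ Y hY p hp
    obtain ⟨y₀, hy₀⟩ := (hMorb Y).1 hY
    rw [mem_RSet_iff] at hp ⊢
    set ρ : Equiv.Perm G := Equiv.mulRight (σ p.1)⁻¹ * σ * Equiv.mulRight p.1 with hρdef
    have hρM : ρ ∈ M := M.mul_mem (M.mul_mem (hMright _) hσ) (hMright _)
    have hρ1 : ρ 1 = 1 := by simp [hρdef, Equiv.Perm.mul_apply]
    have hρstab : (⟨ρ, hρM⟩ : M) ∈ MulAction.stabilizer M (1 : G) := by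
      rw [MulAction.mem_stabilizer_iff]
      exact hρ1
    have hyo : p.2 * p.1⁻¹ ∈ MulAction.orbit (MulAction.stabilizer M (1:G)) y₀ := by
      have h2 : p.2 * p.1⁻¹ ∈ (Y : Set G) := by exact_mod_cast hp
      rwa [hy₀] at h2
    obtain ⟨τ, hτ⟩ := hyo
    have key : σ p.2 * (σ p.1)⁻¹ =
        (((⟨⟨ρ, hρM⟩, hρstab⟩ : MulAction.stabilizer M (1:G)) * τ) • y₀ : G) := by
      rw [mul_smul]
      have hτ2 : τ • y₀ = p.2 * p.1⁻¹ := hτ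
      rw [hτ2, coe_smulM]
      show σ p.2 * (σ p.1)⁻¹ = ρ (p.2 * p.1⁻¹)
      simp [hρdef, Equiv.Perm.mul_apply, inv_mul_cancel_right]
    have hmem : σ p.2 * (σ p.1)⁻¹ ∈ (Y : Set G) := by
      rw [hy₀, key]; exact MulAction.mem_orbit _ _
    exact_mod_cast hmem
  have hMaut : ∀ σ ∈ M, ∀ Y ∈ A.basicSets, Prod.map ⇑σ ⇑σ '' RSet Y = RSet Y := by
    intro σ hσ Y hY
    ext p
    constructor
    · rintro ⟨q, hq, rfl⟩
      exact hMfixY σ hσ Y hY q hq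
    · intro hp
      refine ⟨(σ⁻¹ p.1, σ⁻¹ p.2), hMfixY σ⁻¹ (M.inv_mem hσ) Y hY p hp, ?_⟩
      simp [Prod.map]
  have hML : ∀ σ ∈ M, σ ∈ L := by
    intro σ hσ
    rw [hLdef, mem_relAut]
    intro W hW
    obtain ⟨X, hX, hRW⟩ := hWunion W hW
    rw [hRW, Set.image_iUnion₂]
    refine Set.iUnion₂_congr ?_
    intro f hf
    exact hMaut σ hσ _ (hψmem f hf X hX)
  have hRightL : ∀ a : G, Equiv.mulRight a ∈ L := by
    intro a
    rw [hLdef, mem_relAut]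
    intro W hW
    ext p
    constructor
    · rintro ⟨q, hq, rfl⟩
      rw [mem_RSet_iff] at hq ⊢
      simp only [Prod.map, Equiv.coe_mulRight]
      simpa [mul_inv_rev, mul_assoc] using hq
    · intro hp
      refine ⟨(p.1 * a⁻¹, p.2 * a⁻¹), ?_, ?_⟩
      · rw [mem_RSet_iff] at hp ⊢
        simpa [mul_inv_rev, mul_assoc] using hp
      · simp [Prod.map, Equiv.coe_mulRight]
  have horb : ∀ W ∈ A'.basicSets, ∀ g ∈ W,
      (W : Set G) = MulAction.orbit (MulAction.stabilizer L (1 : G)) g := by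
    intro W hW g hg
    obtain ⟨X, hX, hXW⟩ := (hA' W).1 hW
    obtain ⟨x, hx⟩ := A.nonempty_mem X hX
    have hmemW : ∀ u : G, u ∈ W ↔ ∃ f ∈ K, u ∈ ψ f X := by
      intro u
      have h1 : u ∈ W ↔ u ∈ (W : Set G) := by simp
      rw [h1, hXW]
      simp [Set.mem_iUnion]
    have claim : ∀ f ∈ K, ∀ u ∈ ψ f X,
        ∃ ρ : Equiv.Perm G, ρ ∈ L ∧ ρ 1 = 1 ∧ ρ x = u := by
      intro f hf u hu
      set σf : Equiv.Perm G := Equiv.mulRight (f 1)⁻¹ * f with hσfdef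
      have hσfL : σf ∈ L := mul_mem (hRightL _) (hKL f hf)
      have hσf1 : σf 1 = 1 := by simp [hσfdef, Equiv.Perm.mul_apply]
      have hσfx : σf x ∈ ψ f X := by
        have h1x : ((1 : G), x) ∈ RSet X := (mem_RSet_iff _ _).2 (by simpa using hx)
        have h2 : ((f 1 : G), (f x : G)) ∈ RSet (ψ f X) := by
          rw [hψR f hf X hX]
          exact ⟨((1:G), x), h1x, rfl⟩
        have h3 := (mem_RSet_iff _ _).1 h2
        simpa [hσfdef, Equiv.Perm.mul_apply] using h3
      obtain ⟨y₀, hy₀⟩ := (hMorb (ψ f X)).1 (hψmem f hf X hX)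
      have hu' : u ∈ MulAction.orbit (MulAction.stabilizer M (1:G)) y₀ := by
        have h2 : u ∈ ((ψ f X : Finset G) : Set G) := by exact_mod_cast hu
        rwa [hy₀] at h2
      have hσfx' : σf x ∈ MulAction.orbit (MulAction.stabilizer M (1:G)) y₀ := by
        have h2 : σf x ∈ ((ψ f X : Finset G) : Set G) := by exact_mod_cast hσfx
        rwa [hy₀] at h2
      obtain ⟨τ, hτ⟩ := hu'
      obtain ⟨τ', hτ'⟩ := hσfx'
      have hτd : τ.1.1 y₀ = u := hτ
      have hτ'd : τ'.1.1 y₀ = σf x := hτ'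
      have ht2 : (τ.1.1 : Equiv.Perm G) 1 = 1 := τ.2
      have ht1 : (τ'.1.1 : Equiv.Perm G) 1 = 1 := τ'.2
      refine ⟨τ.1.1 * (τ'.1.1)⁻¹ * σf, ?_, ?_, ?_⟩
      · exact mul_mem (mul_mem (hML _ τ.1.2) (inv_mem (hML _ τ'.1.2))) hσfL
      · rw [Equiv.Perm.mul_apply, Equiv.Perm.mul_apply, hσf1]
        have h3 : ((τ'.1.1 : Equiv.Perm G))⁻¹ 1 = 1 := by
          have h := congrArg ⇑(τ'.1.1)⁻¹ ht1
          rw [Equiv.Perm.inv_def, Equiv.symm_apply_apply] at h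
          exact h.symm
        rw [h3, ht2]
      · rw [Equiv.Perm.mul_apply, Equiv.Perm.mul_apply]
        have h5 : ((τ'.1.1 : Equiv.Perm G))⁻¹ (σf x) = y₀ := by
          rw [← hτ'd]
          exact Equiv.symm_apply_apply _ _
        rw [h5, hτd]
    ext h
    simp only [Finset.mem_coe]
    constructor
    · intro hh
      obtain ⟨f1, hf1, hg1⟩ := (hmemW g).1 hg
      obtain ⟨f2, hf2, hh2⟩ := (hmemW h).1 hh
      obtain ⟨ρ1, hρ1L, hρ11, hρ1x⟩ := claim f1 hf1 g hg1
      obtain ⟨ρ2, hρ2L, hρ21, hρ2x⟩ := claim f2 hf2 h hh2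
      refine ⟨⟨⟨ρ2 * ρ1⁻¹, mul_mem hρ2L (inv_mem hρ1L)⟩, ?_⟩, ?_⟩
      · rw [MulAction.mem_stabilizer_iff]
        show (ρ2 * ρ1⁻¹) 1 = 1
        rw [Equiv.Perm.mul_apply]
        have h6 : ρ1⁻¹ 1 = 1 := by
          have h := congrArg ⇑ρ1⁻¹ hρ11
          rw [Equiv.Perm.inv_def, Equiv.symm_apply_apply] at h
          exact h.symm
        rw [h6, hρ21]
      · show (ρ2 * ρ1⁻¹) g = h
        rw [Equiv.Perm.mul_apply]
        have h7 : ρ1⁻¹ g = x := by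
          rw [← hρ1x]
          exact Equiv.symm_apply_apply _ _
        rw [h7, hρ2x]
    · rintro ⟨k, rfl⟩
      show k.1.1 g ∈ W
      have hk1 : (k.1.1 : Equiv.Perm G) 1 = 1 := k.2
      have hkL : ∀ W ∈ A'.basicSets,
          Prod.map ⇑(k.1.1) ⇑(k.1.1) '' RSet W = RSet W := mem_relAut.mp k.1.2
      have h1g : ((1:G), g) ∈ RSet W := (mem_RSet_iff _ _).2 (by simpa using hg)
      have himg : ((k.1.1 1 : G), (k.1.1 g : G)) ∈ RSet W := by
        rw [← hkL W hW]
        exact ⟨((1:G), g), h1g, rfl⟩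
      rw [hk1] at himg
      have h8 := (mem_RSet_iff _ _).1 himg
      simpa using h8
  refine ⟨L, hRightL, ?_⟩
  intro X
  constructor
  · intro hX
    obtain ⟨g, hg⟩ := A'.nonempty_mem X hX
    exact ⟨g, horb X hX g hg⟩
  · rintro ⟨g, hXg⟩
    obtain ⟨W, hW, hgW⟩ := A'.exists_mem g
    have h9 := horb W hW g hgW
    have hXW : (X : Set G) = (W : Set G) := by rw [hXg, h9]
    rw [Finset.coe_inj.mp hXW]
    exact hW
end

section
/- Let G be a finite abelian group with Ω*(|G|) ≥ 2. Then G has a subgroup H such that either |H| = pq for some (not necessarily distinct) odd primes p and q, or |H| = 4q for some odd prime q, or |H| = 8. -/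
open Pointwise

lemma card_sup_of_coprime {G : Type*} [CommGroup G] [Fintype G] (K L : Subgroup G)
    (hcop : Nat.Coprime (Nat.card K) (Nat.card L)) :
    Nat.card ↥(K ⊔ L) = Nat.card K * Nat.card L := by
  have h1 : Nat.card K ∣ Nat.card ↥(K ⊔ L) := Subgroup.card_dvd_of_le le_sup_left
  have h2 : Nat.card L ∣ Nat.card ↥(K ⊔ L) := Subgroup.card_dvd_of_le le_sup_right
  have hd : Nat.card K * Nat.card L ∣ Nat.card ↥(K ⊔ L) := hcop.mul_dvd_of_dvd_of_dvd h1 h2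
  have hle : Nat.card ↥(K ⊔ L) ≤ Nat.card K * Nat.card L := by
    have : (↑(K ⊔ L) : Set G) = (K : Set G) * (L : Set G) := Subgroup.mul_normal K L
    calc Nat.card ↥(K ⊔ L) = Nat.card ((K : Set G) * (L : Set G) : Set G) := by rw [← this]; rfl
    _ ≤ Nat.card (K : Set G) * Nat.card (L : Set G) := Set.natCard_mul_le
    _ = Nat.card K * Nat.card L := rfl
  exact Nat.le_antisymm hle (Nat.le_of_dvd (Nat.card_pos) hd)

lemma exists_subgroup_pq {G : Type*} [CommGroup G] [Fintype G] {p q : ℕ}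
    (hp : p.Prime) (hq : q.Prime) (h : p * q ∣ Nat.card G) :
    ∃ H : Subgroup G, Nat.card H = p * q := by
  haveI : Fact p.Prime := ⟨hp⟩
  haveI : Fact q.Prime := ⟨hq⟩
  by_cases hpq : p = q
  · subst hpq
    obtain ⟨K, hK⟩ := Sylow.exists_subgroup_card_pow_prime (G := G) p (n := 2)
      (by rwa [pow_two])
    exact ⟨K, by rwa [pow_two] at hK⟩
  · obtain ⟨K, hK⟩ := Sylow.exists_subgroup_card_pow_prime (G := G) p (n := 1)
      (by rw [pow_one]; exact (dvd_mul_right p q).trans h)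
    obtain ⟨L, hL⟩ := Sylow.exists_subgroup_card_pow_prime (G := G) q (n := 1)
      (by rw [pow_one]; exact (dvd_mul_left q p).trans h)
    rw [pow_one] at hK hL
    refine ⟨K ⊔ L, ?_⟩
    rw [card_sup_of_coprime K L (by rw [hK, hL]; exact (Nat.coprime_primes hp hq).2 hpq), hK, hL]

lemma exists_subgroup_4q {G : Type*} [CommGroup G] [Fintype G] {q : ℕ}
    (hq : q.Prime) (hqo : Odd q) (h : 4 * q ∣ Nat.card G) :
    ∃ H : Subgroup G, Nat.card H = 4 * q := by
  haveI : Fact (Nat.Prime 2) := ⟨Nat.prime_two⟩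
  haveI : Fact q.Prime := ⟨hq⟩
  have hq2 : q ≠ 2 := by rintro rfl; norm_num [Nat.odd_iff] at hqo
  obtain ⟨K, hK⟩ := Sylow.exists_subgroup_card_pow_prime (G := G) 2 (n := 2)
    (by rw [show (2:ℕ)^2 = 4 from rfl]; exact (dvd_mul_right 4 q).trans h)
  obtain ⟨L, hL⟩ := Sylow.exists_subgroup_card_pow_prime (G := G) q (n := 1)
    (by rw [pow_one]; exact (dvd_mul_left q 4).trans h)
  rw [pow_one] at hL
  rw [show (2:ℕ)^2 = 4 from rfl] at hK
  refine ⟨K ⊔ L, ?_⟩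
  rw [card_sup_of_coprime K L ?_, hK, hL]
  rw [hK, hL, show (4:ℕ) = 2^2 from rfl]
  exact Nat.Coprime.pow_left _ ((Nat.coprime_primes Nat.prime_two hq).2 (Ne.symm hq2))

lemma exists_two_factors {k : ℕ} (hk0 : k ≠ 0) (h : 2 ≤ bigOmega k) :
    ∃ p q : ℕ, p.Prime ∧ q.Prime ∧ p ≤ q ∧ p * q ∣ k := by
  simp only [bigOmega] at h
  rcases e : k.primeFactorsList with _ | ⟨p, _ | ⟨q, rest⟩⟩
  · rw [e] at h; simp at h
  · rw [e] at h; simp at h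
  · have hp : p.Prime := Nat.prime_of_mem_primeFactorsList (by rw [e]; simp)
    have hq : q.Prime := Nat.prime_of_mem_primeFactorsList (by rw [e]; simp)
    have hsort := Nat.primeFactorsList_sorted k
    rw [e] at hsort
    have hle : p ≤ q := (List.pairwise_cons.mp hsort.pairwise).1 q (by simp)
    have hprod := Nat.prod_primeFactorsList hk0
    rw [e] at hprod
    exact ⟨p, q, hp, hq, hle, ⟨rest.prod, by rw [← hprod]; simp [List.prod_cons]; ring⟩⟩


/-- A finite abelian group `G` with `Ω*(|G|) ≥ 2` has a subgroup `H`
with `|H| = pq` for odd primes `p, q` (not necessarily distinct), or `|H| = 4q` for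
an odd prime `q`, or `|H| = 8`. -/
theorem exists_subgroup_of_omegaStar (G : Type) [CommGroup G] [Fintype G]
    (h : 2 ≤ OmegaStar (Fintype.card G)) :
    ∃ H : Subgroup G,
      (∃ p q : ℕ, p.Prime ∧ q.Prime ∧ Odd p ∧ Odd q ∧ Nat.card H = p * q) ∨
      (∃ q : ℕ, q.Prime ∧ Odd q ∧ Nat.card H = 4 * q) ∨
      Nat.card H = 8 := by
  have hcard : Nat.card G = Fintype.card G := Nat.card_eq_fintype_card
  have hn0 : Fintype.card G ≠ 0 := Fintype.card_ne_zero
  by_cases h2 : 2 ∣ Fintype.card G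
  · rw [OmegaStar, if_pos h2] at h
    have hk0 : Fintype.card G / 2 ≠ 0 :=
      Nat.pos_iff_ne_zero.mp (Nat.div_pos (Nat.le_of_dvd (Nat.pos_of_ne_zero hn0) h2) two_pos)
    obtain ⟨p, q, hp, hq, hle, hdvd⟩ := exists_two_factors hk0 h
    have hnk : Fintype.card G = 2 * (Fintype.card G / 2) := (Nat.mul_div_cancel' h2).symm
    by_cases hp2 : p = 2
    · subst hp2
      by_cases hq2 : q = 2
      · subst hq2
        obtain ⟨c, hc⟩ := hdvd
        haveI : Fact (Nat.Prime 2) := ⟨Nat.prime_two⟩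
        obtain ⟨K, hK⟩ := Sylow.exists_subgroup_card_pow_prime (G := G) 2 (n := 3)
          (⟨c, by rw [hcard, hnk, hc]; ring⟩)
        exact ⟨K, Or.inr (Or.inr (by rw [hK]; norm_num))⟩
      · have hqo : Odd q := hq.odd_of_ne_two hq2
        obtain ⟨c, hc⟩ := hdvd
        obtain ⟨H, hH⟩ := exists_subgroup_4q (G := G) hq hqo
          ⟨c, by rw [hcard, hnk, hc]; ring⟩
        exact ⟨H, Or.inr (Or.inl ⟨q, hq, hqo, hH⟩)⟩
    · have hpo : Odd p := hp.odd_of_ne_two hp2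
      have hq2 : q ≠ 2 := by
        rintro rfl
        exact hp2 (le_antisymm hle hp.two_le)
      have hqo : Odd q := hq.odd_of_ne_two hq2
      obtain ⟨H, hH⟩ := exists_subgroup_pq (G := G) hp hq
        (hcard ▸ hdvd.trans (Nat.div_dvd_of_dvd h2))
      exact ⟨H, Or.inl ⟨p, q, hp, hq, hpo, hqo, hH⟩⟩
  · rw [OmegaStar, if_neg h2] at h
    obtain ⟨p, q, hp, hq, hle, hdvd⟩ := exists_two_factors hn0 h
    have hp2 : p ≠ 2 := by
      rintro rfl
      exact h2 ((dvd_mul_right 2 q).trans hdvd)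
    have hq2 : q ≠ 2 := by
      rintro rfl
      exact h2 ((dvd_mul_left 2 p).trans hdvd)
    obtain ⟨H, hH⟩ := exists_subgroup_pq (G := G) hp hq (hcard ▸ hdvd)
    exact ⟨H, Or.inl ⟨p, q, hp, hq, hp.odd_of_ne_two hp2, hq.odd_of_ne_two hq2, hH⟩⟩
end

section
/- Let G be a finite group with identity e and let K be a permutation group on G with G_right ≤ K ≤ Sym(G), where G_right is the image of the right regular representation of G. Then the ℤ-span of {X̲ : X ∈ Orb(K_e, G)}, where K_e is the stabilizer of e in K and the orbits of K_e on G form the underlying partition, is an S-ring over G. -/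
open Pointwise

section SchurAux

variable {G : Type*} [Group G] [Fintype G] [DecidableEq G] {K : Subgroup (Equiv.Perm G)}

lemma mem_orbit_stab_iff {g x : G} :
    x ∈ MulAction.orbit (MulAction.stabilizer K (1 : G)) g ↔
      ∃ σ : Equiv.Perm G, σ ∈ K ∧ σ 1 = 1 ∧ σ g = x := by
  constructor
  · rintro ⟨h, rfl⟩
    exact ⟨((h : K) : Equiv.Perm G), (h : K).2, h.2, rfl⟩
  · rintro ⟨σ, hσK, hσ1, rfl⟩
    exact ⟨⟨⟨σ, hσK⟩, hσ1⟩, rfl⟩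

lemma apply_mem_orbit_stab {g x : G} {σ : Equiv.Perm G} (hσK : σ ∈ K) (hσ1 : σ 1 = 1)
    (hx : x ∈ MulAction.orbit (MulAction.stabilizer K (1 : G)) g) :
    σ x ∈ MulAction.orbit (MulAction.stabilizer K (1 : G)) g := by
  rw [mem_orbit_stab_iff] at hx ⊢
  obtain ⟨ρ, hρK, hρ1, rfl⟩ := hx
  exact ⟨σ * ρ, mul_mem hσK hρK, by simp [hρ1, hσ1], rfl⟩

lemma inv_mem_orbit_inv (hK : ∀ g : G, Equiv.mulRight g ∈ K) {g x : G}
    (hx : x⁻¹ ∈ MulAction.orbit (MulAction.stabilizer K (1 : G)) g) :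
    x ∈ MulAction.orbit (MulAction.stabilizer K (1 : G)) g⁻¹ := by
  rw [mem_orbit_stab_iff] at hx ⊢
  obtain ⟨σ, hσK, hσ1, hσg⟩ := hx
  refine ⟨Equiv.mulRight (σ g)⁻¹ * σ * Equiv.mulRight g,
    mul_mem (mul_mem (hK _) hσK) (hK _), ?_, ?_⟩
  · simp [hσ1]
  · simp [hσ1, hσg]

lemma cnt_eq_of_stab (hK : ∀ g : G, Equiv.mulRight g ∈ K) {X Y : Finset G}
    (hX : ∀ τ : Equiv.Perm G, τ ∈ K → τ 1 = 1 → ∀ x ∈ X, τ x ∈ X)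
    (hY : ∀ τ : Equiv.Perm G, τ ∈ K → τ 1 = 1 → ∀ y ∈ Y, τ y ∈ Y)
    {σ : Equiv.Perm G} (hσK : σ ∈ K) (hσ1 : σ 1 = 1) (z : G) :
    cnt X Y z = cnt X Y (σ z) := by
  have hσiK : σ⁻¹ ∈ K := inv_mem hσK
  have hσi1 : σ⁻¹ 1 = 1 := by
    conv_lhs => rw [← hσ1]
    exact Equiv.symm_apply_apply σ 1
  unfold cnt
  refine Finset.card_nbij' (fun p => (σ (p.1 * p.2) * (σ p.2)⁻¹, σ p.2))
    (fun q => (σ⁻¹ (q.1 * q.2) * (σ⁻¹ q.2)⁻¹, σ⁻¹ q.2)) ?_ ?_ ?_ ?_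
  · rintro ⟨x, y⟩ hp
    simp only [Finset.mem_coe, Finset.mem_filter, Finset.mem_product] at hp ⊢
    obtain ⟨⟨hx, hy⟩, hz⟩ := hp
    refine ⟨⟨?_, hY σ hσK hσ1 y hy⟩, by simp [hz]⟩
    have hτ : (Equiv.mulRight (σ y)⁻¹ * σ * Equiv.mulRight y) x ∈ X := by
      refine hX _ (mul_mem (mul_mem (hK _) hσK) (hK _)) (by simp [hσ1]) x hx
    simpa using hτ
  · rintro ⟨x, y⟩ hp
    simp only [Finset.mem_coe, Finset.mem_filter, Finset.mem_product] at hp ⊢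
    obtain ⟨⟨hx, hy⟩, hz⟩ := hp
    refine ⟨⟨?_, hY σ⁻¹ hσiK hσi1 y hy⟩, by simp [hz]⟩
    have hτ : (Equiv.mulRight (σ⁻¹ y)⁻¹ * σ⁻¹ * Equiv.mulRight y) x ∈ X := by
      refine hX _ (mul_mem (mul_mem (hK _) hσiK) (hK _)) (by simp [hσi1]) x hx
    simpa using hτ
  · rintro ⟨x, y⟩ hp
    simp [mul_assoc]
  · rintro ⟨x, y⟩ hp
    simp [mul_assoc]

end SchurAux

/-- For a permutation group `K` with `G_right ≤ K ≤ Sym(G)`, the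
partition of `G` into the orbits of the stabilizer `K_e` of the identity defines an
S-ring over `G` (Schur's theorem: `V(K,G)` is an S-ring). -/
theorem orbit_partition_is_SRing (G : Type) [Group G] [Fintype G] [DecidableEq G]
    (K : Subgroup (Equiv.Perm G)) (hK : ∀ g : G, Equiv.mulRight g ∈ K) :
    ∃ A : SRing G, ∀ X : Finset G, X ∈ A.basicSets ↔
      ∃ g : G, (X : Set G) = MulAction.orbit (MulAction.stabilizer K (1 : G)) g := by
  classical
  let orbF : G → Finset G := fun g => (MulAction.orbit (MulAction.stabilizer K (1 : G)) g).toFinset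
  have horbF : ∀ g, ((orbF g : Finset G) : Set G) = MulAction.orbit (MulAction.stabilizer K (1 : G)) g := fun g =>
    Set.coe_toFinset _
  have hmem : ∀ X : Finset G, X ∈ Finset.univ.image orbF ↔
      ∃ g : G, (X : Set G) = MulAction.orbit (MulAction.stabilizer K (1 : G)) g := by
    intro X
    constructor
    · rintro hX
      obtain ⟨g, -, rfl⟩ := Finset.mem_image.mp hX
      exact ⟨g, horbF g⟩
    · rintro ⟨g, hg⟩
      refine Finset.mem_image.mpr ⟨g, Finset.mem_univ g, ?_⟩
      apply Finset.coe_injective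
      rw [horbF g, hg]
  have hcl : ∀ X : Finset G, (∃ g : G, (X : Set G) = MulAction.orbit (MulAction.stabilizer K (1 : G)) g) →
      ∀ τ : Equiv.Perm G, τ ∈ K → τ 1 = 1 → ∀ x ∈ X, τ x ∈ X := by
    rintro X ⟨g, hg⟩ τ hτK hτ1 x hx
    have : x ∈ MulAction.orbit (MulAction.stabilizer K (1 : G)) g := by rw [← hg]; exact hx
    have := apply_mem_orbit_stab hτK hτ1 this
    rw [← hg] at this
    exact this
  refine ⟨⟨Finset.univ.image orbF, ?_, ?_, ?_, ?_, ?_, ?_⟩, hmem⟩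
  · intro X hX
    obtain ⟨g, hg⟩ := (hmem X).mp hX
    refine ⟨g, ?_⟩
    rw [← Finset.mem_coe, hg]
    exact MulAction.mem_orbit_self g
  · intro g
    refine ⟨orbF g, (hmem _).mpr ⟨g, horbF g⟩, ?_⟩
    rw [← Finset.mem_coe, horbF g]
    exact MulAction.mem_orbit_self g
  · intro X hX Y hY hne
    obtain ⟨g, hg⟩ := (hmem X).mp hX
    obtain ⟨g', hg'⟩ := (hmem Y).mp hY
    rw [Finset.disjoint_left]
    intro a haX haY
    apply hne
    apply Finset.coe_injective
    rw [hg, hg']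
    have ha : a ∈ MulAction.orbit (MulAction.stabilizer K (1 : G)) g := by rw [← hg]; exact haX
    have ha' : a ∈ MulAction.orbit (MulAction.stabilizer K (1 : G)) g' := by rw [← hg']; exact haY
    rw [← MulAction.orbit_eq_iff.mpr ha, MulAction.orbit_eq_iff.mpr ha']
  · refine (hmem _).mpr ⟨1, ?_⟩
    ext x
    simp only [Finset.coe_singleton, Set.mem_singleton_iff, mem_orbit_stab_iff]
    constructor
    · rintro rfl
      exact ⟨1, one_mem K, Equiv.Perm.one_apply 1, Equiv.Perm.one_apply 1⟩
    · rintro ⟨σ, -, h1, hx⟩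
      rw [← hx]
      exact h1
  · intro X hX
    obtain ⟨g, hg⟩ := (hmem X).mp hX
    refine (hmem _).mpr ⟨g⁻¹, ?_⟩
    rw [Finset.coe_inv, hg]
    ext x
    rw [Set.mem_inv]
    constructor
    · exact fun h => inv_mem_orbit_inv hK h
    · intro h
      have := inv_mem_orbit_inv hK (g := g⁻¹) (x := x⁻¹) (by simpa using h)
      simpa using this
  · intro X hX Y hY Z hZ z hz z' hz'
    obtain ⟨gZ, hgZ⟩ := (hmem Z).mp hZ
    have hz0 : z ∈ MulAction.orbit (MulAction.stabilizer K (1 : G)) gZ := by rw [← hgZ]; exact hz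
    have hz0' : z' ∈ MulAction.orbit (MulAction.stabilizer K (1 : G)) gZ := by rw [← hgZ]; exact hz'
    have : z' ∈ MulAction.orbit (MulAction.stabilizer K (1 : G)) z := by
      rw [MulAction.orbit_eq_iff.mpr hz0]
      exact hz0'
    rw [mem_orbit_stab_iff] at this
    obtain ⟨σ, hσK, hσ1, rfl⟩ := this
    exact cnt_eq_of_stab hK (hcl X ((hmem X).mp hX)) (hcl Y ((hmem Y).mp hY)) hσK hσ1 z
end
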